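/- Let P(ζ, η) = η^k + ∑_{i=2}^k α_i η^{k-i}ζ^i + β(ζ^{2k} + (-1)^k) with α_i, β ∈ ℝ and β ≠ 0. Suppose for some unimodular q ∈ ℂ the substitution (ζ, η) ↦ (-q̄/(qζ), η/(qζ)²) maps the zero set of P to itself, i.e., (qζ)^{2k} P(-q̄/(qζ), η/(qζ)²) = P(ζ, η) up to a nonzero constant. Then (-q²)^k = 1. -/

import Mathlib

open Finset Polynomial

/-- If the order-2 rotation `(ζ, η) ↦ (-q̄/(qζ), η/(qζ)²)` about an axis orthogonal to the
`x₃`-axis preserves the cyclically symmetric spectral curve (up to a nonzero constant),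
then `(-q²)^k = 1`. -/
theorem rotation_symmetry_constraint (k : ℕ) (hk : 2 ≤ k)
    (α : ℕ → ℝ) (β : ℝ) (hβ : β ≠ 0) (q : ℂ) (hq : ‖q‖ = 1)
    (P : ℂ → ℂ → ℂ)
    (hP : ∀ ζ η : ℂ, P ζ η =
      η ^ k + (∑ i ∈ Finset.Icc 2 k, (α i : ℂ) * η ^ (k - i) * ζ ^ i) +
        (β : ℂ) * (ζ ^ (2 * k) + (-1) ^ k))
    (c : ℂ) (hc : c ≠ 0)
    (hsym : ∀ ζ : ℂ, ζ ≠ 0 → ∀ η : ℂ,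
      P ζ η = c * (q * ζ) ^ (2 * k) *
        P (-(starRingEnd ℂ) q / (q * ζ)) (η / (q * ζ) ^ 2)) :
    (-q ^ 2) ^ k = 1 := by
  have hq0 : q ≠ 0 := by
    intro h; simp [h] at hq
  have hmul : q * (starRingEnd ℂ) q = 1 := by
    rw [Complex.mul_conj, ← Complex.sq_norm, hq]; norm_num
  have hconj : (starRingEnd ℂ) q = q⁻¹ := by
    field_simp
    linear_combination hmul
  have hk0 : k ≠ 0 := by omega
  -- Step 1 : c = 1
  have hc1 : c = 1 := by
    set D1 : ℂ := (β : ℂ) * (1 + (-1) ^ k) with hD1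
    set D2 : ℂ := (β : ℂ) * ((q⁻¹) ^ (2 * k) + (-1) ^ k * q ^ (2 * k)) with hD2
    set p : Polynomial ℂ := X ^ k + (∑ i ∈ Icc 2 k, C (α i : ℂ) * X ^ (k - i)) + C D1 with hpdef
    set r : Polynomial ℂ := X ^ k + (∑ i ∈ Icc 2 k, C ((α i : ℂ) * (-1) ^ i) * X ^ (k - i)) + C D2 with hrdef
    have hbr : ∀ η : ℂ, q ^ (2 * k) * ((η / q ^ 2) ^ k +
        (∑ i ∈ Icc 2 k, (α i : ℂ) * (η / q ^ 2) ^ (k - i) * (-(q⁻¹) / q) ^ i) +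
        (β : ℂ) * ((-(q⁻¹) / q) ^ (2 * k) + (-1) ^ k)) = r.eval η := by
      intro η
      have e1 : q ^ (2 * k) * (η / q ^ 2) ^ k = η ^ k := by
        rw [pow_mul, div_pow]
        field_simp
      have e3 : q ^ (2 * k) * ((β : ℂ) * ((-(q⁻¹) / q) ^ (2 * k) + (-1) ^ k)) = D2 := by
        rw [neg_div, Even.neg_pow (even_two_mul k)]
        rw [hD2]
        simp only [div_pow, inv_pow]
        field_simp
      rw [mul_add, mul_add, Finset.mul_sum, e1, e3, hrdef]
      simp only [eval_add, eval_pow, eval_X, eval_finset_sum, eval_mul, eval_C]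
      congr 1
      congr 1
      apply Finset.sum_congr rfl
      intro i hi
      rw [mem_Icc] at hi
      have hik : (q : ℂ) ^ (2 * k) = (q ^ 2) ^ (k - i) * (q ^ 2) ^ i := by
        rw [← pow_add, Nat.sub_add_cancel hi.2, pow_mul]
      rw [hik, neg_div, neg_pow, div_pow, div_pow]
      simp only [inv_pow]
      field_simp
      ring
    have hpr : p = C c * r := by
      apply Polynomial.funext
      intro η
      have h1 := hsym 1 one_ne_zero η
      rw [hP, hP, hconj] at h1
      have hL : p.eval η = η ^ k + (∑ i ∈ Icc 2 k, (α i : ℂ) * η ^ (k - i) * (1:ℂ) ^ i) +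
          (β : ℂ) * ((1:ℂ) ^ (2 * k) + (-1) ^ k) := by
        simp [hpdef, hD1, eval_finset_sum]
      rw [hL, ← congrArg (fun ζ => η ^ k + (∑ i ∈ Icc 2 k, (α i : ℂ) * η ^ (k - i) * ζ ^ i) +
          (β : ℂ) * (ζ ^ (2 * k) + (-1) ^ k)) (rfl : (1:ℂ) = 1)]
      simp only [mul_one] at h1
      rw [h1, eval_mul, eval_C, mul_assoc, hbr]
    have hsum0 : ∀ (f : ℕ → ℂ), (∑ i ∈ Icc 2 k, C (f i) * X ^ (k - i)).coeff k = 0 := by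
      intro f
      rw [finset_sum_coeff]
      apply Finset.sum_eq_zero
      intro i hi
      rw [mem_Icc] at hi
      rw [coeff_C_mul, coeff_X_pow, if_neg (by omega)]
      ring
    have hp : p.coeff k = 1 := by
      rw [hpdef, coeff_add, coeff_add, coeff_X_pow, if_pos rfl, hsum0 (fun i => (α i : ℂ)),
        coeff_C, if_neg hk0]
      ring
    have hr : r.coeff k = 1 := by
      rw [hrdef, coeff_add, coeff_add, coeff_X_pow, if_pos rfl,
        hsum0 (fun i => (α i : ℂ) * (-1) ^ i), coeff_C, if_neg hk0]
      ring
    have := congrArg (fun f : Polynomial ℂ => f.coeff k) hpr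
    simp only [coeff_C_mul, hp, hr, mul_one] at this
    exact this.symm
  -- Step 2 : the key scalar identity at η = 0
  have key : ∀ ζ : ℂ, ζ ≠ 0 →
      (α k : ℂ) * ζ ^ k + (β : ℂ) * (ζ ^ (2 * k) + (-1) ^ k) =
        (-1) ^ k * (α k : ℂ) * ζ ^ k + (β : ℂ) * (q ^ (2 * k))⁻¹ +
          (β : ℂ) * (-1) ^ k * q ^ (2 * k) * ζ ^ (2 * k) := by
    intro ζ hζ
    have h := hsym ζ hζ 0
    rw [hP, hP, hconj, hc1, one_mul] at h
    rw [zero_pow hk0, zero_div, zero_pow hk0] at h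
    have hsL : (∑ i ∈ Icc 2 k, (α i : ℂ) * (0:ℂ) ^ (k - i) * ζ ^ i) = (α k : ℂ) * ζ ^ k := by
      rw [Finset.sum_eq_single_of_mem k (mem_Icc.mpr ⟨hk, le_refl k⟩)]
      · simp
      · intro i hi hik
        rw [mem_Icc] at hi
        rw [zero_pow (by omega : k - i ≠ 0)]
        ring
    have hsR : (∑ i ∈ Icc 2 k, (α i : ℂ) * (0:ℂ) ^ (k - i) * (-(q⁻¹) / (q * ζ)) ^ i) =
        (α k : ℂ) * (-(q⁻¹) / (q * ζ)) ^ k := by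
      rw [Finset.sum_eq_single_of_mem k (mem_Icc.mpr ⟨hk, le_refl k⟩)]
      · simp
      · intro i hi hik
        rw [mem_Icc] at hi
        rw [zero_pow (by omega : k - i ≠ 0)]
        ring
    rw [hsL, hsR] at h
    simp only [zero_add] at h
    rw [h]
    have hqζ : q * ζ ≠ 0 := mul_ne_zero hq0 hζ
    rw [neg_div, neg_pow, Even.neg_pow (even_two_mul k), div_pow, div_pow]
    have hm1 : ((-1 : ℂ)) ^ (2 * k) = 1 := by
      rw [pow_mul]; norm_num
    simp only [inv_pow]
    field_simp
    ring
  -- Step 3 : evaluate at three points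
  obtain ⟨zm, hzm⟩ := IsAlgClosed.exists_pow_nat_eq (-1 : ℂ) (n := k) (by omega)
  obtain ⟨z2, hz2⟩ := IsAlgClosed.exists_pow_nat_eq (2 : ℂ) (n := k) (by omega)
  have hzm0 : zm ≠ 0 := by
    intro h; rw [h, zero_pow hk0] at hzm; norm_num at hzm
  have hz20 : z2 ≠ 0 := by
    intro h; rw [h, zero_pow hk0] at hz2; norm_num at hz2
  have E1 := key 1 one_ne_zero
  have Em := key zm hzm0
  have E2 := key z2 hz20
  rw [one_pow, one_pow] at E1
  have hzm2 : zm ^ (2 * k) = 1 := by rw [mul_comm, pow_mul, hzm]; norm_num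
  have hz22 : z2 ^ (2 * k) = 4 := by rw [mul_comm, pow_mul, hz2]; norm_num
  rw [hzm, hzm2] at Em
  rw [hz2, hz22] at E2
  have hβc : (β : ℂ) ≠ 0 := by exact_mod_cast hβ
  have hu0 : (q : ℂ) ^ (2 * k) ≠ 0 := pow_ne_zero _ hq0
  have hbu : (β : ℂ) * (1 - (-1) ^ k * q ^ (2 * k)) = 0 := by
    have hv : q ^ (2 * k) * (q ^ (2 * k))⁻¹ = 1 := mul_inv_cancel₀ hu0
    linear_combination (-(1 : ℂ) / 2) * E1 + (1 / 6) * Em + (1 / 3) * E2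
  have heu : (-1 : ℂ) ^ k * q ^ (2 * k) = 1 := by
    rcases mul_eq_zero.mp hbu with h | h
    · exact absurd h hβc
    · exact (sub_eq_zero.mp h).symm
  rw [neg_pow, ← pow_mul]
  exact heu
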